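/- Let (X,p) be a TVS-cone metric space over a locally convex space E whose topology is generated by a family S of monotone seminorms (so the cone P is normal). If (x_n) cone-converges to x and (y_n) cone-converges to y, then p(x_n, y_n) → p(x, y) in the topology of E. -/

import Mathlib

open Filter Topology Pointwise

section Defs

variable {E : Type*} [AddCommGroup E] [Module ℝ E] [TopologicalSpace E]

/-- `P` is a closed, pointed convex cone with nonempty interior in the TVS `E`. -/
structure IsTVSCone (P : Set E) : Prop where
  add_mem : ∀ ⦃a⦄, a ∈ P → ∀ ⦃b⦄, b ∈ P → a + b ∈ P
  smul_mem : ∀ (r : ℝ), 0 ≤ r → ∀ ⦃a⦄, a ∈ P → r • a ∈ P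
  pointed : ∀ a, a ∈ P → -a ∈ P → a = 0
  isClosed : IsClosed P
  int_nonempty : (interior P).Nonempty

/-- `a ≤ b` with respect to the cone `P`. -/
def ConeLe (P : Set E) (a b : E) : Prop := b - a ∈ P

/-- `a ≪ b` with respect to the cone `P`. -/
def ConeLt (P : Set E) (a b : E) : Prop := b - a ∈ interior P

/-- `p : X × X → E` is a TVS-cone metric over the cone `P`. -/
structure IsConeMetric (P : Set E) {X : Type*} (p : X → X → E) : Prop where
  nonneg : ∀ x y, ConeLe P 0 (p x y)
  eq_zero_iff : ∀ x y, p x y = 0 ↔ x = y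
  symm : ∀ x y, p x y = p y x
  triangle : ∀ x y z, ConeLe P (p x y) (p x z + p z y)

/-- The sequence `x` cone-converges to `a`. -/
def ConeConverges (P : Set E) {X : Type*} (p : X → X → E) (x : ℕ → X) (a : X) : Prop :=
  ∀ c, c ∈ interior P → ∃ N, ∀ n ≥ N, ConeLt P (p (x n) a) c

/-- The sequence `x` is cone-Cauchy. -/
def ConeCauchy (P : Set E) {X : Type*} (p : X → X → E) (x : ℕ → X) : Prop :=
  ∀ c, c ∈ interior P → ∃ N, ∀ n ≥ N, ∀ m ≥ N, ConeLt P (p (x n) (x m)) c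

/-- `(X, p)` is cone-complete. -/
def ConeComplete (P : Set E) {X : Type*} (p : X → X → E) : Prop :=
  ∀ x : ℕ → X, ConeCauchy P p x → ∃ a, ConeConverges P p x a

/-- The nonlinear scalarization ξ_e(y) = inf {t : t • e - y ∈ P}. -/
noncomputable def xiScal (P : Set E) (e y : E) : ℝ := sInf {t : ℝ | t • e - y ∈ P}

/-- The open ball `B(x, c) = {y : p x y ≪ c}`. -/
def coneBall (P : Set E) {X : Type*} (p : X → X → E) (x : X) (c : E) : Set X :=
  {y | ConeLt P (p x y) c}

/-- The cone metric topology `τ_p`, generated by the balls `B(x,c)`, `c ≫ 0`. -/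
def coneTopology (P : Set E) {X : Type*} (p : X → X → E) : TopologicalSpace X :=
  TopologicalSpace.generateFrom {s | ∃ x c, c ∈ interior P ∧ s = coneBall P p x c}

end Defs

/-- over a normal cone in a locally convex space, if `x_n → x` and `y_n → y`
(cone convergence), then `p (x_n) (y_n) → p x y` in `E`. -/
theorem stmt_3 {E X : Type*} [AddCommGroup E] [Module ℝ E] [TopologicalSpace E]
    [IsTopologicalAddGroup E] [ContinuousSMul ℝ E] [T2Space E] [Nonempty X]
    {ι : Type*} [Nonempty ι] (S : ι → Seminorm ℝ E) (hS : WithSeminorms S)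
    (P : Set E) (hP : IsTVSCone P)
    (hmono : ∀ i : ι, ∀ a b : E, a ∈ P → ConeLe P a b → S i a ≤ S i b)
    (p : X → X → E) (hp : IsConeMetric P p)
    (x y : ℕ → X) (a b : X)
    (hx : ConeConverges P p x a) (hy : ConeConverges P p y b) :
    Tendsto (fun n => p (x n) (y n)) atTop (nhds (p a b)) := by
  -- auxiliary: seminorms of p (x n) a tend to 0
  have key : ∀ (z : ℕ → X) (w : X), ConeConverges P p z w →
      ∀ i ε, (0:ℝ) < ε → ∃ N, ∀ n ≥ N, S i (p (z n) w) < ε := by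
    intro z w hz i ε hε
    obtain ⟨e, he⟩ := hP.int_nonempty
    set t : ℝ := ε / (S i e + 1) with ht
    have hSe : (0:ℝ) < S i e + 1 := by positivity
    have ht0 : 0 < t := div_pos hε hSe
    have hc : t • e ∈ interior P := by
      have hopen : IsOpen (t • interior P) := isOpen_interior.smul₀ (ne_of_gt ht0)
      have hsub : t • interior P ⊆ P := by
        rintro _ ⟨u, hu, rfl⟩
        exact hP.smul_mem t ht0.le (interior_subset hu)
      exact interior_maximal hsub hopen ⟨e, he, rfl⟩
    obtain ⟨N, hN⟩ := hz (t • e) hc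
    refine ⟨N, fun n hn => ?_⟩
    have h1 : p (z n) w ∈ P := by
      have := hp.nonneg (z n) w
      simpa [ConeLe] using this
    have h2 : ConeLe P (p (z n) w) (t • e) := interior_subset (hN n hn)
    have h3 : S i (p (z n) w) ≤ S i (t • e) := hmono i _ _ h1 h2
    have h4 : S i (t • e) = t * S i e := by
      rw [map_smul_eq_mul, Real.norm_of_nonneg ht0.le]
    calc S i (p (z n) w) ≤ t * S i e := h4 ▸ h3
      _ < t * (S i e + 1) := by nlinarith
      _ = ε := by rw [ht, div_mul_cancel₀ _ hSe.ne']
  rw [hS.tendsto_nhds]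
  intro i ε hε
  obtain ⟨N₁, hN₁⟩ := key x a hx i (ε / 6) (by linarith)
  obtain ⟨N₂, hN₂⟩ := key y b hy i (ε / 6) (by linarith)
  rw [Filter.eventually_atTop]
  refine ⟨max N₁ N₂, fun n hn => ?_⟩
  have hn1 := hN₁ n (le_trans (le_max_left _ _) hn)
  have hn2 := hN₂ n (le_trans (le_max_right _ _) hn)
  set u := p (x n) (y n)
  set v := p a b
  set d := p (x n) a + p (y n) b with hd
  have huv : ConeLe P u (d + v) := by
    have t1 : ConeLe P u (p (x n) a + p a (y n)) := hp.triangle _ _ _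
    have t2 : ConeLe P (p a (y n)) (p a b + p b (y n)) := hp.triangle _ _ _
    have t3 : ConeLe P (p (x n) a + p a (y n)) (p (x n) a + (p a b + p b (y n))) := by
      have : ((p (x n) a + (p a b + p b (y n))) - (p (x n) a + p a (y n)))
          = (p a b + p b (y n)) - p a (y n) := by abel
      simpa [ConeLe, this] using t2
    have t4 : ConeLe P u (p (x n) a + (p a b + p b (y n))) := by
      have := hP.add_mem t3 t1
      simpa [ConeLe] using (by
        have h : ((p (x n) a + (p a b + p b (y n))) - (p (x n) a + p a (y n)))
            + ((p (x n) a + p a (y n)) - u) = (p (x n) a + (p a b + p b (y n))) - u := by abel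
        exact h ▸ this)
    have : p (x n) a + (p a b + p b (y n)) = d + v := by
      rw [hd, hp.symm b (y n)]; abel
    exact this ▸ t4
  have hvu : ConeLe P v (d + u) := by
    have t1 : ConeLe P v (p a (x n) + p (x n) b) := hp.triangle _ _ _
    have t2 : ConeLe P (p (x n) b) (p (x n) (y n) + p (y n) b) := hp.triangle _ _ _
    have t4 : ConeLe P v (p a (x n) + (p (x n) (y n) + p (y n) b)) := by
      have t3 : ((p a (x n) + (p (x n) (y n) + p (y n) b)) - (p a (x n) + p (x n) b))
          = (p (x n) (y n) + p (y n) b) - p (x n) b := by abel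
      have h3 : ConeLe P (p a (x n) + p (x n) b) (p a (x n) + (p (x n) (y n) + p (y n) b)) := by
        simpa [ConeLe, t3] using t2
      have := hP.add_mem h3 t1
      have h : ((p a (x n) + (p (x n) (y n) + p (y n) b)) - (p a (x n) + p (x n) b))
          + ((p a (x n) + p (x n) b) - v) = (p a (x n) + (p (x n) (y n) + p (y n) b)) - v := by abel
      simpa [ConeLe] using h ▸ this
    have : p a (x n) + (p (x n) (y n) + p (y n) b) = d + u := by
      rw [hd, hp.symm a (x n)]; abel
    exact this ▸ t4
  -- now -(d) ≤ u - v ≤ d, derive S i (u - v) ≤ 3 * S i d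
  have hdP : d ∈ P := by
    have h1 : p (x n) a ∈ P := by simpa [ConeLe] using hp.nonneg (x n) a
    have h2 : p (y n) b ∈ P := by simpa [ConeLe] using hp.nonneg (y n) b
    simpa using hP.add_mem h1 h2
  have hw1 : (u - v) + d ∈ P := by
    have := hvu
    simpa [ConeLe] using (by
      have h : (d + u) - v = (u - v) + d := by abel
      exact h ▸ this)
  have hw2 : ConeLe P ((u - v) + d) ((2:ℝ) • d) := by
    have := huv
    have h : (2:ℝ) • d - ((u - v) + d) = (d + v) - u := by
      rw [two_smul]; abel
    simpa [ConeLe, h] using this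
  have hq1 : S i ((u - v) + d) ≤ S i ((2:ℝ) • d) := hmono i _ _ hw1 hw2
  have hq2 : S i ((2:ℝ) • d) = 2 * S i d := by
    rw [map_smul_eq_mul]; norm_num
  have hq3 : S i (u - v) ≤ S i ((u - v) + d) + S i d := by
    have := map_sub_le_add (S i) ((u - v) + d) d
    simpa using this
  have hqd : S i d ≤ S i (p (x n) a) + S i (p (y n) b) := map_add_le_add _ _ _
  calc S i (u - v) ≤ S i ((u - v) + d) + S i d := hq3
    _ ≤ 2 * S i d + S i d := by linarith [hq1, hq2 ▸ hq1]
    _ = 3 * S i d := by ring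
    _ ≤ 3 * (S i (p (x n) a) + S i (p (y n) b)) := by linarith
    _ < ε := by linarith
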